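/- Let n ≥ 5 be odd, ϑ := n·cos(π/n)/(1 + cos(π/n)), a := 1/ϑ, b := (n − ϑ)/(2ϑ²), and let X* be the real symmetric (1+n)×(1+n) matrix (indexed 0,1,…,n) with X*_{00} = 1, X*_{0j} = X*_{j0} = a for j ∈ {1,…,n}, and lower-right n×n block equal to the circulant matrix circ(u), where u ∈ ℝ^n has u_0 = a, u_1 = u_{n−1} = b and all other entries 0. If w_0, w_1, …, w_n are vectors in ℝ^d whose Gram matrix equals X* (i.e. ⟨w_i, w_j⟩ = X*_{ij} for all 0 ≤ i, j ≤ n), then d ≥ n − 2. (Hence any quantum realisation achieving the optimal quantum bound of the anti-hole inequality for odd n events requires dimension at least n − 2.) -/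

import Mathlib

open scoped RealInnerProductSpace

/-- The (unique) primal optimal solution `X*` of the Lovász theta SDP of the complement `C̄_n`
of the `n`-cycle (rows/columns indexed `0, 1, …, n`): with
`ϑ = n·cos(π/n)/(1 + cos(π/n))`, `a = 1/ϑ` and `b = (n - ϑ)/(2ϑ²)`, it has `X* 0 0 = 1`,
`X* 0 j = X* j 0 = a` for `j ∈ {1, …, n}`, and lower right `n × n` block the circulant matrix
`circ(u)` where `u 0 = a`, `u 1 = u (n-1) = b` and all other entries of `u` vanish. -/
noncomputable def antiHoleXstar (n : ℕ) : Matrix (Fin (n + 1)) (Fin (n + 1)) ℝ :=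
  fun i j =>
    let θ : ℝ := n * Real.cos (Real.pi / n) / (1 + Real.cos (Real.pi / n))
    let a : ℝ := 1 / θ
    let b : ℝ := (n - θ) / (2 * θ ^ 2)
    if i.val = 0 ∧ j.val = 0 then 1
    else if i.val = 0 ∨ j.val = 0 then a
    else
      -- entry of the circulant block at positions `i, j ∈ {1, …, n}`: `u ((j - i) mod n)`
      if (j.val + n - i.val) % n = 0 then a
      else if (j.val + n - i.val) % n = 1 ∨ (j.val + n - i.val) % n = n - 1 then b
      else 0

lemma antiHoleXstar_entry (n : ℕ) (hn : 5 ≤ n) (k l : ℕ) (hk : k < n - 2) (hl : l < n - 2) :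
    antiHoleXstar n ⟨k + 1, by omega⟩ ⟨l + 1, by omega⟩ =
      if k = l then 1 / ((n : ℝ) * Real.cos (Real.pi / n) / (1 + Real.cos (Real.pi / n)))
      else if k + 1 = l ∨ l + 1 = k then
        ((n : ℝ) - (n : ℝ) * Real.cos (Real.pi / n) / (1 + Real.cos (Real.pi / n))) /
          (2 * ((n : ℝ) * Real.cos (Real.pi / n) / (1 + Real.cos (Real.pi / n))) ^ 2)
      else 0 := by
  have h1 : ¬ ((k + 1) = 0 ∧ (l + 1) = 0) := by omega
  have h2 : ¬ ((k + 1) = 0 ∨ (l + 1) = 0) := by omega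
  simp only [antiHoleXstar, Fin.val_mk, if_neg h1, if_neg h2]
  rcases le_or_gt k l with h | h
  · have he : l + 1 + n - (k + 1) = n + (l - k) := by omega
    have hmod : (l + 1 + n - (k + 1)) % n = l - k := by
      rw [he, Nat.add_mod_left, Nat.mod_eq_of_lt (by omega)]
    rw [hmod]
    split_ifs <;> first | rfl | omega
  · have hmod : (l + 1 + n - (k + 1)) % n = n - (k - l) := by
      rw [Nat.mod_eq_of_lt (by omega)]; omega
    rw [hmod]
    split_ifs <;> first | rfl | omega

lemma tridiag_linearIndependent (m d : ℕ) (hm : 3 ≤ m) (a b c sθ : ℝ)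
    (hb : b ≠ 0) (hab : a = 2 * b * c) (hsθ : sθ ≠ 0)
    (v : Fin m → EuclideanSpace ℝ (Fin d))
    (hgram : ∀ k l : Fin m, ⟪v k, v l⟫ =
      if (k : ℕ) = l then a else if (k : ℕ) + 1 = l ∨ (l : ℕ) + 1 = k then b else 0)
    (sn : ℕ → ℝ) (hsin0 : sn 0 = 0) (hsin1 : sn 1 = sθ)
    (hsinrec : ∀ j : ℕ, sn (j + 2) + sn j = 2 * c * sn (j + 1))
    (hsintop : sn (m + 1) ≠ 0) :
    LinearIndependent ℝ v := by
  rw [Fintype.linearIndependent_iff]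
  intro g hg
  classical
  set s : ℕ → ℝ := fun k => if h : 1 ≤ k ∧ k ≤ m then g ⟨k - 1, by omega⟩ else 0 with hs'
  have hsval : ∀ k : Fin m, s ((k : ℕ) + 1) = g k := by
    intro k
    have hk := k.isLt
    simp only [hs']
    exact dif_pos ⟨by omega, by omega⟩
  have hs0 : s 0 = 0 := by simp [hs']
  have hstop : ∀ k, m < k → s k = 0 := by
    intro k hk
    simp only [hs']
    rw [dif_neg (by omega)]
  have hrel : ∀ j : ℕ, j < m → b * s j + a * s (j + 1) + b * s (j + 2) = 0 := by
    intro j hj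
    have h0 : ⟪v ⟨j, hj⟩, ∑ k, g k • v k⟫ = 0 := by rw [hg, inner_zero_right]
    rw [inner_sum] at h0
    simp only [real_inner_smul_right] at h0
    have hsummand : ∀ k : Fin m, g k * ⟪v ⟨j, hj⟩, v k⟫ =
        (if k = ⟨j, hj⟩ then a * g k else 0)
        + (if (k : ℕ) = j + 1 then b * g k else 0)
        + (if (k : ℕ) + 1 = j then b * g k else 0) := by
      intro k
      rw [hgram]
      have hk := k.isLt
      have hkj : (k = ⟨j, hj⟩) ↔ ((k : ℕ) = j) := ⟨fun h => by rw [h], fun h => Fin.ext h⟩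
      by_cases h1 : (j : ℕ) = (k : ℕ)
      · rw [if_pos h1, if_pos (hkj.mpr h1.symm), if_neg (by omega), if_neg (by omega)]
        ring
      · rw [if_neg h1, if_neg (fun h => h1 (hkj.mp h).symm)]
        by_cases h2 : j + 1 = (k : ℕ)
        · rw [if_pos (Or.inl h2), if_pos h2.symm, if_neg (by omega)]; ring
        · by_cases h3 : (k : ℕ) + 1 = j
          · rw [if_pos (Or.inr h3), if_neg (by omega), if_pos h3]; ring
          · rw [if_neg (by tauto), if_neg (by omega), if_neg h3]; ring
    rw [Finset.sum_congr rfl (fun k _ => hsummand k)] at h0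
    rw [Finset.sum_add_distrib, Finset.sum_add_distrib] at h0
    have e1 : (∑ k : Fin m, if k = ⟨j, hj⟩ then a * g k else 0) = a * s (j + 1) := by
      rw [Finset.sum_ite_eq' Finset.univ (⟨j, hj⟩ : Fin m) (fun k => a * g k)]
      rw [if_pos (Finset.mem_univ _)]
      rw [show s (j + 1) = g ⟨j, hj⟩ from hsval ⟨j, hj⟩]
    have e2 : (∑ k : Fin m, if (k : ℕ) = j + 1 then b * g k else 0) = b * s (j + 2) := by
      by_cases hj1 : j + 1 < m
      · have : ∀ k : Fin m, ((k : ℕ) = j + 1) ↔ (k = ⟨j + 1, hj1⟩) :=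
          fun k => ⟨fun h => Fin.ext h, fun h => by rw [h]⟩
        simp only [this]
        rw [Finset.sum_ite_eq' Finset.univ (⟨j + 1, hj1⟩ : Fin m) (fun k => b * g k)]
        rw [if_pos (Finset.mem_univ _)]
        rw [show s (j + 2) = g ⟨j + 1, hj1⟩ from hsval ⟨j + 1, hj1⟩]
      · rw [Finset.sum_eq_zero (fun k _ => by
          rw [if_neg (by have := k.isLt; omega)]), hstop (j + 2) (by omega), mul_zero]
    have e3 : (∑ k : Fin m, if (k : ℕ) + 1 = j then b * g k else 0) = b * s j := by
      rcases Nat.eq_zero_or_pos j with hj0 | hj0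
      · rw [Finset.sum_eq_zero (fun k _ => by rw [if_neg (by omega)]), hj0, hs0, mul_zero]
      · have hjm : j - 1 < m := by omega
        have : ∀ k : Fin m, ((k : ℕ) + 1 = j) ↔ (k = ⟨j - 1, hjm⟩) :=
          fun k => ⟨fun h => Fin.ext (show (k : ℕ) = j - 1 by omega), fun h => by rw [h]; show j - 1 + 1 = j; omega⟩
        simp only [this]
        rw [Finset.sum_ite_eq' Finset.univ (⟨j - 1, hjm⟩ : Fin m) (fun k => b * g k)]
        rw [if_pos (Finset.mem_univ _)]
        have := hsval ⟨j - 1, hjm⟩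
        simp only [Fin.val_mk] at this
        rw [show j - 1 + 1 = j by omega] at this
        rw [this]
    rw [e1, e2, e3] at h0
    linarith
  have hform : ∀ k, k ≤ m + 1 → s k * sθ = (-1) ^ (k + 1) * s 1 * sn k := by
    intro k
    induction k using Nat.strong_induction_on with
    | _ k ih =>
      intro hk
      match k with
      | 0 => simp [hs0, hsin0]
      | 1 => simp [hsin1]
      | (j + 2) =>
        have h1 := ih j (by omega) (by omega)
        have h2 := ih (j + 1) (by omega) (by omega)
        have h3 := hrel j (by omega)
        rw [hab] at h3
        have hx : b * (s j + 2 * c * s (j + 1) + s (j + 2)) = 0 := by linarith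
        have h4 : s j + 2 * c * s (j + 1) + s (j + 2) = 0 :=
          (mul_eq_zero.mp hx).resolve_left hb
        have h5 : sn (j + 2) = 2 * c * sn (j + 1) - sn j := by linarith [hsinrec j]
        have h6 : s (j + 2) = - s j - 2 * c * s (j + 1) := by linarith
        calc s (j + 2) * sθ = -(s j * sθ) - 2 * c * (s (j + 1) * sθ) := by rw [h6]; ring
          _ = -((-1) ^ (j + 1) * s 1 * sn j) - 2 * c * ((-1) ^ (j + 1 + 1) * s 1 * sn (j + 1)) := by
              rw [h1, h2]
          _ = (-1) ^ (j + 2 + 1) * s 1 * sn (j + 2) := by rw [h5]; ring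
  have hs1 : s 1 = 0 := by
    have h := hform (m + 1) le_rfl
    rw [hstop (m + 1) (by omega), zero_mul] at h
    rcases mul_eq_zero.mp h.symm with h' | h'
    · rcases mul_eq_zero.mp h' with h'' | h''
      · exact absurd h'' (pow_ne_zero _ (by norm_num))
      · exact h''
    · exact absurd h' hsintop
  intro i
  rw [← hsval i]
  have h := hform ((i : ℕ) + 1) (by have := i.isLt; omega)
  rw [hs1, mul_zero, zero_mul] at h
  exact (mul_eq_zero.mp h).resolve_right hsθ

/-- If `w_0, w_1, …, w_n` are vectors of `ℝ^d` whose Gram matrix is the optimal solution `X*`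
of the Lovász theta SDP of `C̄_n` (for odd `n ≥ 5`), then `d ≥ n - 2`: any quantum realisation
achieving the optimal quantum bound of the anti-hole inequality needs dimension at least
`n - 2`. -/
theorem antiHole_dimension_lower_bound (n : ℕ) (hodd : Odd n) (hn : 5 ≤ n)
    (d : ℕ) (w : Fin (n + 1) → EuclideanSpace ℝ (Fin d))
    (hw : ∀ i j : Fin (n + 1), ⟪w i, w j⟫ = antiHoleXstar n i j) :
    n - 2 ≤ d := by
  classical
  have hπ := Real.pi_pos
  have hnR : (0:ℝ) < n := by exact_mod_cast (by omega : 0 < n)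
  have hcpos : (0:ℝ) < Real.cos (Real.pi / n) := by
    apply Real.cos_pos_of_mem_Ioo
    have hn' : (2:ℝ) < n := by exact_mod_cast (by omega : 2 < n)
    constructor
    · have : 0 < Real.pi / n := by positivity
      linarith
    · exact div_lt_div_of_pos_left hπ (by norm_num) hn'
  have hspos : (0:ℝ) < Real.sin (Real.pi / n) := by
    have hn' : (1:ℝ) < n := by exact_mod_cast (by omega : 1 < n)
    exact Real.sin_pos_of_pos_of_lt_pi (by positivity) (div_lt_self hπ hn')
  set c : ℝ := Real.cos (Real.pi / n) with hc
  have h1c : (0:ℝ) < 1 + c := by linarith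
  have hθpos : (0:ℝ) < (n : ℝ) * c / (1 + c) := div_pos (mul_pos hnR hcpos) h1c
  set θv : ℝ := (n : ℝ) * c / (1 + c) with hθ
  set a : ℝ := 1 / θv with ha
  set b : ℝ := ((n : ℝ) - θv) / (2 * θv ^ 2) with hb
  have hθn : (n : ℝ) - θv > 0 := by
    rw [hθ]
    have : (n : ℝ) * c / (1 + c) < n := by
      rw [div_lt_iff₀ h1c]; nlinarith
    linarith
  have hbpos : 0 < b := by
    rw [hb]
    apply div_pos hθn
    positivity
  have hab : a = 2 * b * c := by
    rw [ha, hb, hθ]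
    field_simp
    ring
  -- the vectors
  set m := n - 2 with hm
  have hm3 : 3 ≤ m := by omega
  let v : Fin m → EuclideanSpace ℝ (Fin d) :=
    fun k => w ⟨(k : ℕ) + 1, by have := k.isLt; omega⟩
  have hgram : ∀ k l : Fin m, ⟪v k, v l⟫ =
      if (k : ℕ) = l then a else if (k : ℕ) + 1 = l ∨ (l : ℕ) + 1 = k then b else 0 := by
    intro k l
    have hk := k.isLt
    have hl := l.isLt
    show ⟪w _, w _⟫ = _
    rw [hw, antiHoleXstar_entry n hn (k : ℕ) (l : ℕ) (by omega) (by omega)]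
  -- trig data
  have hsinrec : ∀ j : ℕ, Real.sin ((j + 2 : ℕ) * (Real.pi / n)) + Real.sin ((j : ℕ) * (Real.pi / n))
      = 2 * c * Real.sin ((j + 1 : ℕ) * (Real.pi / n)) := by
    intro j
    have e1 : ((j + 2 : ℕ) : ℝ) * (Real.pi / n) = ((j + 1 : ℕ) : ℝ) * (Real.pi / n) + Real.pi / n := by
      push_cast; ring
    have e2 : ((j : ℕ) : ℝ) * (Real.pi / n) = ((j + 1 : ℕ) : ℝ) * (Real.pi / n) - Real.pi / n := by
      push_cast; ring
    rw [e1, e2, Real.sin_add, Real.sin_sub, hc]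
    ring
  have hsintop : Real.sin ((m + 1 : ℕ) * (Real.pi / n)) ≠ 0 := by
    have hn0 : (n : ℝ) ≠ 0 := ne_of_gt hnR
    have e0 : m + 1 = n - 1 := by omega
    have e1 : ((m + 1 : ℕ) : ℝ) = (n : ℝ) - 1 := by
      rw [e0, Nat.cast_sub (by omega : 1 ≤ n), Nat.cast_one]
    have e : ((m + 1 : ℕ) : ℝ) * (Real.pi / n) = Real.pi - Real.pi / n := by
      rw [e1]; field_simp
    rw [e, Real.sin_pi_sub]
    exact ne_of_gt hspos
  have hli : LinearIndependent ℝ v :=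
    tridiag_linearIndependent m d hm3 a b c (Real.sin (Real.pi / n))
      (ne_of_gt hbpos) hab (ne_of_gt hspos) v hgram
      (fun k => Real.sin ((k : ℕ) * (Real.pi / n)))
      (by simp) (by simp) hsinrec hsintop
  have hcard := hli.fintype_card_le_finrank
  rw [Fintype.card_fin, finrank_euclideanSpace_fin] at hcard
  exact hcard
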